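/- Let a ≥ 2 be an integer and let 𝓕 be a family of distinct sets, partially ordered by inclusion. If 𝓕 contains an (ℓ,α)-ladder, then 𝓕 contains an a-union-free subfamily of size at least ℓ·max{α, 1}. -/

import Mathlib

/-- A family of sets is *`a`-union-free* if there are no `a+1` distinct sets
`X₁, …, X_{a+1}` in the family with `X₁ ∪ ⋯ ∪ X_a = X_{a+1}`. -/
def AUnionFree (a : ℕ) (F : Finset (Finset ℕ)) : Prop :=
  ∀ X : Fin (a + 1) → Finset ℕ, Function.Injective X → (∀ i, X i ∈ F) →
    Finset.univ.sup (fun i : Fin a => X i.castSucc) ≠ X (Fin.last a)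

/-- `S` contains an `(l, α)`-ladder: a chain `X 0 ⊂ X 1 ⊂ ⋯ ⊂ X (l-1)` together
with `l` antichains `Y 0, …, Y (l-1)`, each of size `α`, such that every member of
`Y i` is contained in `X i`, and no member of `Y (i+1)` is contained in `X i`. -/
def HasLadderIn (S : Set (Finset ℕ)) (l α : ℕ) : Prop :=
  ∃ (X : ℕ → Finset ℕ) (Y : ℕ → Finset (Finset ℕ)),
    (∀ i, i < l → X i ∈ S) ∧
    (∀ i j, i < j → j < l → X i ⊂ X j) ∧
    (∀ i, i < l → ↑(Y i) ⊆ S) ∧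
    (∀ i, i < l → (Y i).card = α) ∧
    (∀ i, i < l → IsAntichain (· ⊆ ·) (↑(Y i) : Set (Finset ℕ))) ∧
    (∀ i, i < l → ∀ Z ∈ Y i, Z ⊆ X i) ∧
    (∀ i, i + 1 < l → ∀ Z ∈ Y (i + 1), ¬ Z ⊆ X i)

/-- Lemma 4: an `(l, α)`-ladder in a family of sets contains an `a`-union-free
subfamily of size at least the size of the ladder, which is `l · max {α, 1}`. -/
theorem ladder_aUnionFree (a : ℕ) (ha : 2 ≤ a) (F : Finset (Finset ℕ)) (l α : ℕ)
    (h : HasLadderIn (↑F) l α) :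
    ∃ G ⊆ F, AUnionFree a G ∧ l * max α 1 ≤ G.card := by
  obtain ⟨X, Y, hXF, hchain, hYF, hYcard, hYanti, hYX, hYnot⟩ := h
  have hmono : ∀ i j, i ≤ j → j < l → X i ⊆ X j := by
    intro i j hij hjl
    rcases eq_or_lt_of_le hij with rfl | h'
    · exact subset_rfl
    · exact (hchain i j h' hjl).subset
  rcases Nat.eq_zero_or_pos α with rfl | hα
  · -- chain case
    refine ⟨(Finset.range l).image X, ?_, ?_, ?_⟩
    · intro Z hZ
      simp only [Finset.mem_image, Finset.mem_range] at hZ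
      obtain ⟨i, hi, rfl⟩ := hZ
      exact hXF i hi
    · intro Z hZinj hZmem hsup
      have hex : ∀ i : Fin (a + 1), ∃ m, m < l ∧ Z i = X m := by
        intro i
        have := hZmem i
        simp only [Finset.mem_image, Finset.mem_range] at this
        obtain ⟨m, hm, hmx⟩ := this
        exact ⟨m, hm, hmx.symm⟩
      choose f hf hfx using hex
      have hane : (Finset.univ : Finset (Fin a)).Nonempty := by
        have : Nonempty (Fin a) := ⟨⟨0, by omega⟩⟩
        exact Finset.univ_nonempty
      obtain ⟨i₀, -, hi₀⟩ := Finset.exists_max_image Finset.univ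
        (fun i : Fin a => f i.castSucc) hane
      have hle : Finset.univ.sup (fun i : Fin a => Z i.castSucc) ≤ Z i₀.castSucc := by
        apply Finset.sup_le
        intro i _
        rw [hfx i.castSucc, hfx i₀.castSucc, Finset.le_iff_subset]
        exact hmono _ _ (hi₀ i (Finset.mem_univ i)) (hf i₀.castSucc)
      have hge : Z i₀.castSucc ≤ Finset.univ.sup (fun i : Fin a => Z i.castSucc) :=
        Finset.le_sup (f := fun i : Fin a => Z i.castSucc) (Finset.mem_univ i₀)
      have heq : Z i₀.castSucc = Z (Fin.last a) := by
        rw [← hsup]; exact le_antisymm hge hle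
      exact (Fin.castSucc_lt_last i₀).ne (hZinj heq)
    · have : ((Finset.range l).image X).card = l := by
        rw [Finset.card_image_of_injOn, Finset.card_range]
        intro i hi j hj hij
        simp only [Finset.mem_coe, Finset.mem_range] at hi hj
        by_contra hne
        rcases Nat.lt_or_ge i j with h' | h'
        · exact (hchain i j h' hj).ne hij
        · exact (hchain j i (by omega) hi).ne hij.symm
      simp [this]
  · -- antichain case
    have hdis : ∀ i j, i < j → j < l → Disjoint (Y i) (Y j) := by
      intro i j hij hjl
      rw [Finset.disjoint_left]
      intro Z hZi hZj
      have h1 : Z ⊆ X i := hYX i (by omega) Z hZi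
      have hj1 : j - 1 + 1 = j := by omega
      have h2 : ¬ Z ⊆ X (j - 1) := by
        apply hYnot (j - 1) (by omega)
        rw [hj1]; exact hZj
      exact h2 (h1.trans (hmono i (j - 1) (by omega) (by omega)))
    refine ⟨(Finset.range l).biUnion Y, ?_, ?_, ?_⟩
    · intro Z hZ
      simp only [Finset.mem_biUnion, Finset.mem_range] at hZ
      obtain ⟨i, hi, hZi⟩ := hZ
      exact hYF i hi hZi
    · intro Z hZinj hZmem hsup
      have hex : ∀ i : Fin (a + 1), ∃ m, m < l ∧ Z i ∈ Y m := by
        intro i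
        have := hZmem i
        simp only [Finset.mem_biUnion, Finset.mem_range] at this
        obtain ⟨m, hm, hmx⟩ := this
        exact ⟨m, hm, hmx⟩
      choose m hml hmY using hex
      set k := m (Fin.last a) with hk
      have hkl : k < l := hml (Fin.last a)
      have hsub : ∀ i : Fin a, Z i.castSucc ⊆ Z (Fin.last a) := by
        intro i
        have : Z i.castSucc ≤ Finset.univ.sup (fun i : Fin a => Z i.castSucc) :=
          Finset.le_sup (f := fun i : Fin a => Z i.castSucc) (Finset.mem_univ i)
        rw [hsup] at this
        exact this
      have hlt : ∀ i : Fin a, m i.castSucc < k := by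
        intro i
        by_contra hge
        push_neg at hge
        have hne : Z i.castSucc ≠ Z (Fin.last a) := fun e =>
          (Fin.castSucc_lt_last i).ne (hZinj e)
        rcases eq_or_lt_of_le hge with heq | hlt'
        · -- m i.castSucc = k : antichain contradiction
          have := hYanti k hkl
            (by rw [heq]; exact Finset.mem_coe.mpr (hmY i.castSucc))
            (Finset.mem_coe.mpr (hmY (Fin.last a))) hne
          exact this (hsub i)
        · -- k < m i.castSucc
          have hm1 : m i.castSucc - 1 + 1 = m i.castSucc := by omega
          have hnot : ¬ Z i.castSucc ⊆ X (m i.castSucc - 1) := by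
            apply hYnot (m i.castSucc - 1) (by rw [hm1]; exact hml i.castSucc)
            rw [hm1]; exact hmY i.castSucc
          apply hnot
          have hZk : Z (Fin.last a) ⊆ X k := hYX k hkl _ (hmY (Fin.last a))
          have hmi : m i.castSucc < l := hml i.castSucc
          exact (hsub i).trans (hZk.trans (hmono k (m i.castSucc - 1) (by omega)
            (by omega)))
      have hk1 : 1 ≤ k := by
        have := hlt ⟨0, by omega⟩
        omega
      have hsupsub : Z (Fin.last a) ⊆ X (k - 1) := by
        rw [← hsup, ← Finset.le_iff_subset]
        apply Finset.sup_le
        intro i _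
        have h1 : Z i.castSucc ⊆ X (m i.castSucc) := hYX _ (hml i.castSucc) _ (hmY i.castSucc)
        exact h1.trans (hmono (m i.castSucc) (k - 1) (by have := hlt i; omega) (by omega))
      have hnot : ¬ Z (Fin.last a) ⊆ X (k - 1) := by
        apply hYnot (k - 1) (by omega)
        have : k - 1 + 1 = k := by omega
        rw [this]; exact hmY (Fin.last a)
      exact hnot hsupsub
    · have hcard : ((Finset.range l).biUnion Y).card = l * α := by
        rw [Finset.card_biUnion]
        · rw [Finset.sum_congr rfl (fun i hi => hYcard i (Finset.mem_range.mp hi))]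
          simp [mul_comm]
        · intro i hi j hj hij
          simp only [Finset.mem_coe, Finset.mem_range] at hi hj
          rcases Nat.lt_or_ge i j with h' | h'
          · exact hdis i j h' hj
          · exact (hdis j i (by omega) hi).symm
      rw [hcard, Nat.max_eq_left hα]
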